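/- Let (Γ₁, Γ₂, τ) be a Belavin–Drinfeld triple with Γ₁ ∩ Γ₂ = ∅, and set A = J − 1 and B = J⁻¹ − 1, where J = 1 + (q−q⁻¹)Σ_{α∈Γ̃₁} sign(α,τα) q^{K_{α,τα}} e_{τα}⊗e_{−α}. Then: (i) B = Σ_{α∈Γ̃₁} B_{α,τα} e_{τα}⊗e_{−α} for some scalars B_{α,τα} (i.e. B is supported on the same elementary tensors as A); (ii) R̄_J = J⁻¹R_sJ₂₁ = R_s + B + A₂₁ + (q−1)B^⋗ + (q⁻¹−1)A₂₁^⋖, where B^⋗ is the part of B supported on pairs with α ⋗ τα and A₂₁^⋖ is the part of A₂₁ supported on pairs with α ⋖ τα. -/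

import Mathlib

namespace GGS

open Finset
open scoped Classical

noncomputable section

/-- `n × n` complex matrices, `Mat_n(ℂ)`. -/
abbrev MatN (n : ℕ) := Matrix (Fin n) (Fin n) ℂ
/-- `Mat_n(ℂ) ⊗ Mat_n(ℂ)`, realized as matrices indexed by pairs. -/
abbrev MatT (n : ℕ) := Matrix (Fin n × Fin n) (Fin n × Fin n) ℂ
/-- `Mat_n(ℂ)^{⊗3}`. -/
abbrev MatT3 (n : ℕ) := Matrix (Fin n × Fin n × Fin n) (Fin n × Fin n × Fin n) ℂ

/-- Matrix unit `E_{ij}` (ℕ-indices; `0` if out of range). -/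
def E (n i j : ℕ) : MatN n := fun a b => if (a : ℕ) = i ∧ (b : ℕ) = j then 1 else 0

/-- Tensor (Kronecker) product of two `n × n` matrices. -/
def tens {n : ℕ} (A B : MatN n) : MatT n := fun p q => A p.1 q.1 * B p.2 q.2

/-- `M₂₁` : swap of the two tensor factors. -/
def swap21 {n : ℕ} (M : MatT n) : MatT n := fun p q => M (p.2, p.1) (q.2, q.1)

/-- The permutation (Casimir) element `P = Σ E_{ij} ⊗ E_{ji}`. -/
def Pm (n : ℕ) : MatT n := ∑ i ∈ range n, ∑ j ∈ range n, tens (E n i j) (E n j i)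

/-- `P⁰ = Σ E_{ii} ⊗ E_{ii}`. -/
def P0 (n : ℕ) : MatT n := ∑ i ∈ range n, tens (E n i i) (E n i i)

/-- `M₁₂ = M ⊗ 1`. -/
def lift12 {n : ℕ} (M : MatT n) : MatT3 n :=
  fun p q => M (p.1, p.2.1) (q.1, q.2.1) * (if p.2.2 = q.2.2 then 1 else 0)

/-- `M₁₃`. -/
def lift13 {n : ℕ} (M : MatT n) : MatT3 n :=
  fun p q => M (p.1, p.2.2) (q.1, q.2.2) * (if p.2.1 = q.2.1 then 1 else 0)

/-- `M₂₃ = 1 ⊗ M`. -/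
def lift23 {n : ℕ} (M : MatT n) : MatT3 n :=
  fun p q => M (p.2.1, p.2.2) (q.2.1, q.2.2) * (if p.1 = q.1 then 1 else 0)

/-- The quantum Yang–Baxter equation `R₁₂R₁₃R₂₃ = R₂₃R₁₃R₁₂`. -/
def QYBE {n : ℕ} (M : MatT n) : Prop :=
  lift12 M * lift13 M * lift23 M = lift23 M * lift13 M * lift12 M

/-- The Hecke relation `(PR − q)(PR + q⁻¹) = 0`. -/
def Hecke {n : ℕ} (q : ℝ) (M : MatT n) : Prop :=
  (Pm n * M - (q : ℂ) • (1 : MatT n)) * (Pm n * M + (q : ℂ)⁻¹ • (1 : MatT n)) = 0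

/-- Standard basis vector `e_i` of `ℂⁿ` (as a function on indices). -/
def evec (i : ℕ) : ℕ → ℂ := fun k => if k = i then 1 else 0
/-- The root vector `e_i − e_j`. -/
def rvec (i j : ℕ) : ℕ → ℂ := evec i - evec j
/-- The simple root `α_i = e_i − e_{i+1}` (0-based indexing). -/
def svec (i : ℕ) : ℕ → ℂ := rvec i (i + 1)
/-- The inner product on `ℂⁿ` for which `(e_i)` is orthonormal (restricted to real vectors). -/
def ipn (n : ℕ) (x y : ℕ → ℂ) : ℂ := ∑ k ∈ range n, x k * y k

/-- A Belavin–Drinfeld triple of type `A_{n−1}`; simple roots are indexed `0,…,n−2`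
(0-based: index `i` stands for `α_i = e_i − e_{i+1}`). -/
structure BDTriple (n : ℕ) where
  Γ1 : Finset ℕ
  Γ2 : Finset ℕ
  τ : ℕ → ℕ
  mem1 : ∀ i ∈ Γ1, i + 1 < n
  mem2 : ∀ i ∈ Γ2, i + 1 < n
  bij : Set.BijOn τ ↑Γ1 ↑Γ2
  isometry : ∀ i ∈ Γ1, ∀ j ∈ Γ1, ipn n (svec (τ i)) (svec (τ j)) = ipn n (svec i) (svec j)
  nilp : ∀ i ∈ Γ1, ∃ k ≥ 1, τ^[k] i ∉ Γ1

variable {n : ℕ}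

/-- The positive root `e_i − e_j` (`i < j`) lies in `Γ̃₁` (the positive part of `Span Γ₁`). -/
def SpanRoot (T : BDTriple n) (i j : ℕ) : Prop :=
  i < j ∧ ∀ k, i ≤ k → k < j → k ∈ T.Γ1

/-- `q = τ(p)` for positive roots, via the additive extension of `τ` to `Γ̃₁`. -/
def tauStep (T : BDTriple n) (p q : ℕ × ℕ) : Prop :=
  SpanRoot T p.1 p.2 ∧ q.1 < q.2 ∧ rvec q.1 q.2 = ∑ k ∈ Finset.Ico p.1 p.2, svec (T.τ k)

/-- `q = τᵏ(p)`. -/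
def precK (T : BDTriple n) : ℕ → ℕ × ℕ → ℕ × ℕ → Prop
  | 0, p, q => p = q
  | k + 1, p, q => ∃ r, tauStep T p r ∧ precK T k r q

/-- `p ≺ q`, i.e. `q = τᵏ p` for some `k ≥ 1`. -/
def prec (T : BDTriple n) (p q : ℕ × ℕ) : Prop := ∃ k, precK T (k + 1) p q

/-- `p ≺← q` : `q = τᵏ p` and `τᵏ` reverses orientation on `p`. -/
def RevOri (T : BDTriple n) (p q : ℕ × ℕ) : Prop :=
  ∃ k, precK T (k + 1) p q ∧ T.τ^[k + 1] p.1 = q.2 - 1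

/-- `p ≺→ q` : `q = τᵏ p` and `τᵏ` preserves orientation on `p`. -/
def PresOri (T : BDTriple n) (p q : ℕ × ℕ) : Prop :=
  ∃ k, precK T (k + 1) p q ∧ T.τ^[k + 1] p.1 = q.1

/-- `sign(α,β)` : `(−1)^{1−|α|}` in the orientation-reversing case, `1` otherwise. -/
def sgn (T : BDTriple n) (p q : ℕ × ℕ) : ℂ :=
  if RevOri T p q then (-1 : ℂ) ^ (p.2 - p.1 - 1) else 1

/-- Sum over all pairs of (would-be) positive roots with indices `< n`. -/
def sumRoots (n : ℕ) (f : ℕ × ℕ → ℕ × ℕ → MatT n) : MatT n :=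
  ∑ i ∈ range n, ∑ j ∈ range n, ∑ k ∈ range n, ∑ l ∈ range n, f (i, j) (k, l)

/-- `a = Σ_{α≺β} sign(α,β) (e_{−α} ⊗ e_β − e_β ⊗ e_{−α})`. -/
def aMat (T : BDTriple n) : MatT n :=
  sumRoots n fun p q =>
    if prec T p q then
      sgn T p q • (tens (E n p.2 p.1) (E n q.1 q.2) - tens (E n q.1 q.2) (E n p.2 p.1))
    else 0

/-- `r_s = ½ P⁰ + Σ_{α>0} e_{−α} ⊗ e_α`. -/
def rsMat (n : ℕ) : MatT n :=
  (1 / 2 : ℂ) • P0 n +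
    ∑ i ∈ range n, ∑ j ∈ range n, if i < j then tens (E n j i) (E n i j) else 0

/-- `ε = a r_s + r_s a + a²`. -/
def epsMat (T : BDTriple n) : MatT n :=
  aMat T * rsMat n + rsMat n * aMat T + aMat T * aMat T

/-- Entry of a tensor-square matrix, with ℕ indices. -/
def entry (M : MatT n) (a b c d : ℕ) : ℂ :=
  if h : a < n ∧ b < n ∧ c < n ∧ d < n then
    M (⟨a, h.1⟩, ⟨b, h.2.1⟩) (⟨c, h.2.2.1⟩, ⟨d, h.2.2.2⟩)
  else 0

/-- The coefficient of `e_β ⊗ e_{−α}` in `M` (here `p = α`, `q = β`). -/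
def coeffBA (M : MatT n) (p q : ℕ × ℕ) : ℂ := entry M q.1 p.2 q.2 p.1

/-- `q^z = exp(z · ln q)`. -/
def qpow (q : ℝ) (z : ℂ) : ℂ := Complex.exp (z * (Real.log q : ℂ))

/-- The coefficients `K_{α,β}`. -/
def Kc (T : BDTriple n) (p q : ℕ × ℕ) : ℂ :=
  (if p.2 = q.1 then (1 / 2 : ℂ) else 0) - (if q.2 = p.1 then (1 / 2 : ℂ) else 0)
    + (if ∃ g : ℕ × ℕ, prec T p g ∧ prec T g q ∧ p.2 = g.1 then 1 else 0)
    - (if ∃ g : ℕ × ℕ, prec T p g ∧ prec T g q ∧ g.2 = p.1 then 1 else 0)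
    + (if RevOri T p q then 1 - ((p.2 - p.1 : ℕ) : ℂ) else 0)

/-- `Jⁱ = 1 + (q − q⁻¹) Σ_{β = τⁱα} sign(α,β) q^{K_{α,β}} e_β ⊗ e_{−α}`. -/
def Jlevel (q : ℝ) (T : BDTriple n) (i : ℕ) : MatT n :=
  1 + sumRoots n fun p r =>
    if precK T i p r then
      (((q : ℂ) - (q : ℂ)⁻¹) * sgn T p r * qpow q (Kc T p r)) • tens (E n r.1 r.2) (E n p.2 p.1)
    else 0

/-- `J = J¹ J² ⋯` (levels beyond the maximal power of `τ` contribute the identity). -/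
def Jmat (q : ℝ) (T : BDTriple n) : MatT n :=
  ((List.range n).map fun i => Jlevel q T (i + 1)).prod

/-- The standard Drinfeld–Jimbo `R`-matrix `R_s`. -/
def RsQ (n : ℕ) (q : ℝ) : MatT n :=
  (q : ℂ) • P0 n
    + (∑ i ∈ range n, ∑ j ∈ range n, if i ≠ j then tens (E n i i) (E n j j) else 0)
    + ((q : ℂ) - (q : ℂ)⁻¹) •
        (∑ i ∈ range n, ∑ j ∈ range n, if j < i then tens (E n i j) (E n j i) else 0)

/-- `e_{−α} ∧_c e_β = q^{−c} e_{−α} ⊗ e_β − q^c e_β ⊗ e_{−α}` (`p = α`, `r = β`). -/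
def wedgeC {n : ℕ} (q : ℝ) (c : ℂ) (p r : ℕ × ℕ) : MatT n :=
  qpow q (-c) • tens (E n p.2 p.1) (E n r.1 r.2) - qpow q c • tens (E n r.1 r.2) (E n p.2 p.1)

/-- `R̄_GGS = R_s + (q−q⁻¹) Σ_{α≺β} sign(α,β) e_{−α} ∧_{−sign(α,β) ε_{α,β}} e_β`. -/
def RbarGGS (q : ℝ) (T : BDTriple n) : MatT n :=
  RsQ n q + ((q : ℂ) - (q : ℂ)⁻¹) •
    sumRoots n fun p r =>
      if prec T p r then
        sgn T p r • wedgeC q (-(sgn T p r) * coeffBA (epsMat T) p r) p r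
      else 0

/-- `R̄_J = J⁻¹ R_s J₂₁`. -/
def RbarJ (q : ℝ) (T : BDTriple n) : MatT n :=
  (Jmat q T)⁻¹ * RsQ n q * swap21 (Jmat q T)

/-- `q^{r⁰}` for a diagonal⊗diagonal `r⁰`. -/
def qr0 (n : ℕ) (q : ℝ) (r0 : ℕ → ℕ → ℂ) : MatT n :=
  ∑ i ∈ range n, ∑ j ∈ range n, qpow q (r0 i j) • tens (E n i i) (E n j j)

/-- `R_GGS = q^{r⁰} R̄_GGS q^{r⁰}`. -/
def RGGS (q : ℝ) (T : BDTriple n) (r0 : ℕ → ℕ → ℂ) : MatT n :=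
  qr0 n q r0 * RbarGGS q T * qr0 n q r0

/-- `R_J = q^{r⁰} R̄_J q^{r⁰}`. -/
def RJ (q : ℝ) (T : BDTriple n) (r0 : ℕ → ℕ → ℂ) : MatT n :=
  qr0 n q r0 * RbarJ q T * qr0 n q r0

/-- `r⁰ ∈ 𝔥 ∧ 𝔥`, i.e. the coefficient matrix is antisymmetric. -/
def Antisym (n : ℕ) (r0 : ℕ → ℕ → ℂ) : Prop := ∀ i < n, ∀ j < n, r0 i j = -r0 j i

/-- The Belavin–Drinfeld compatibility equations
`((α − τα) ⊗ 1) r⁰ = ½ ((α + τα) ⊗ 1) P⁰` for all `α ∈ Γ₁`, written componentwise. -/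
def Compat (T : BDTriple n) (r0 : ℕ → ℕ → ℂ) : Prop :=
  ∀ s ∈ T.Γ1, ∀ j < n,
    r0 s j - r0 (s + 1) j - r0 (T.τ s) j + r0 (T.τ s + 1) j
      = (1 / 2 : ℂ) *
        ((if j = s then 1 else 0) - (if j = s + 1 then 1 else 0)
          + (if j = T.τ s then 1 else 0) - (if j = T.τ s + 1 then 1 else 0))

/-- `a₊ⁱ` : the part of `a₊` supported on pairs with `β = τⁱα`. -/
def aPlusLev (T : BDTriple n) (i : ℕ) : MatT n :=
  sumRoots n fun p r =>
    if precK T i p r then (-(sgn T p r)) • tens (E n r.1 r.2) (E n p.2 p.1) else 0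

/-- `a₊ = Σ_{α≺β} (−sign(α,β)) e_β ⊗ e_{−α}`. -/
def aPlus (T : BDTriple n) : MatT n :=
  sumRoots n fun p r =>
    if prec T p r then (-(sgn T p r)) • tens (E n r.1 r.2) (E n p.2 p.1) else 0

/-- `a₋ = Σ_{α≺β} sign(α,β) e_{−α} ⊗ e_β`. -/
def aMinus (T : BDTriple n) : MatT n :=
  sumRoots n fun p r =>
    if prec T p r then sgn T p r • tens (E n p.2 p.1) (E n r.1 r.2) else 0

/-- `P₊ = Σ_{i<j} E_{ij}⊗E_{ji} + ½P⁰`. -/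
def PPlus (n : ℕ) : MatT n :=
  (∑ i ∈ range n, ∑ j ∈ range n, if i < j then tens (E n i j) (E n j i) else 0)
    + (1 / 2 : ℂ) • P0 n

/-- `P₋ = Σ_{i>j} E_{ij}⊗E_{ji} + ½P⁰`. -/
def PMinus (n : ℕ) : MatT n :=
  (∑ i ∈ range n, ∑ j ∈ range n, if j < i then tens (E n i j) (E n j i) else 0)
    + (1 / 2 : ℂ) • P0 n

/-- The matrix `Σ_{i≥j} a₊ⁱa₊ʲ − Σ_{i<j} a₊ⁱa₊ʲ + a₊P₋ + a₋P₊ + P₊a₊ + a₊a₋ − a₋a₊`. -/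
def Mmat (T : BDTriple n) : MatT n :=
  (∑ i ∈ range n, ∑ j ∈ range n, if j ≤ i then aPlusLev T (i + 1) * aPlusLev T (j + 1) else 0)
    - (∑ i ∈ range n, ∑ j ∈ range n, if i < j then aPlusLev T (i + 1) * aPlusLev T (j + 1) else 0)
    + aPlus T * PMinus n + aMinus T * PPlus n + PPlus n * aPlus T
    + aPlus T * aMinus T - aMinus T * aPlus T

/-- `L_{α,β}` : `½` if `α ⋖ β`, `−½` if `α ⋗ β`, `0` otherwise. -/
def Lc (p r : ℕ × ℕ) : ℂ :=
  if p.2 = r.1 then 1 / 2 else if r.2 = p.1 then -(1 / 2) else 0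

/-- The part of `M` (viewed on the basis `e_{τα} ⊗ e_{−α}`, `α ∈ Γ̃₁`) supported on
pairs with `α ⋗ τα`. -/
def partGtr (T : BDTriple n) (M : MatT n) : MatT n :=
  sumRoots n fun p r =>
    if tauStep T p r ∧ r.2 = p.1 then coeffBA M p r • tens (E n r.1 r.2) (E n p.2 p.1) else 0

/-- The part of `M` (viewed on the basis `e_{−α} ⊗ e_{τα}`, `α ∈ Γ̃₁`) supported on
pairs with `α ⋖ τα`. -/
def partLess21 (T : BDTriple n) (M : MatT n) : MatT n :=
  sumRoots n fun p r =>
    if tauStep T p r ∧ p.2 = r.1 then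
      entry M p.2 r.1 p.1 r.2 • tens (E n p.2 p.1) (E n r.1 r.2)
    else 0



section Aux
variable {n : ℕ} (T : BDTriple n)

lemma evec_sum (i t : ℕ) : ∑ s ∈ range t, evec i s = if i < t then 1 else 0 := by
  unfold evec
  rw [Finset.sum_ite_eq' (range t) i (fun _ => (1:ℂ))]
  simp [Finset.mem_range]

lemma tau_mem2 {i : ℕ} (h : i ∈ T.Γ1) : T.τ i ∈ T.Γ2 := T.bij.mapsTo h

lemma card_eq {p r : ℕ × ℕ} (h : tauStep T p r) (u : ℕ) :
    ((Finset.Ico p.1 p.2).filter fun k => T.τ k = u).card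
      = if r.1 ≤ u ∧ u < r.2 then 1 else 0 := by
  obtain ⟨hsp, hlt, heq⟩ := h
  have key : ∀ s : ℕ, rvec r.1 r.2 s = ∑ k ∈ Finset.Ico p.1 p.2, svec (T.τ k) s := by
    intro s; rw [heq]; simp
  have hsum : ∀ t : ℕ, ∑ s ∈ range t, rvec r.1 r.2 s
      = ∑ s ∈ range t, ∑ k ∈ Finset.Ico p.1 p.2, svec (T.τ k) s := by
    intro t; exact Finset.sum_congr rfl fun s _ => key s
  have hL : ∀ t : ℕ, ∑ s ∈ range t, rvec r.1 r.2 s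
      = (if r.1 < t then 1 else 0) - (if r.2 < t then 1 else 0) := by
    intro t
    unfold rvec
    simp only [Pi.sub_apply, Finset.sum_sub_distrib, evec_sum]
  have hR : ∀ t : ℕ, ∑ s ∈ range t, ∑ k ∈ Finset.Ico p.1 p.2, svec (T.τ k) s
      = ((((Finset.Ico p.1 p.2).filter fun k => T.τ k + 1 = t).card : ℕ) : ℂ) := by
    intro t
    rw [Finset.sum_comm]
    have : ∀ k ∈ Finset.Ico p.1 p.2, ∑ s ∈ range t, svec (T.τ k) s
        = if T.τ k + 1 = t then 1 else 0 := by
      intro k _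
      unfold svec rvec
      simp only [Pi.sub_apply, Finset.sum_sub_distrib, evec_sum]
      by_cases h1 : T.τ k + 1 = t
      · have h2 : T.τ k < t := by omega
        have h3 : ¬ (T.τ k + 1 < t) := by omega
        simp [h1, h2, h3]
      · by_cases h2 : T.τ k < t
        · have h3 : T.τ k + 1 < t := by omega
          simp [h1, h2, h3]
        · have h3 : ¬ (T.τ k + 1 < t) := by omega
          simp [h1, h2, h3]
    rw [Finset.sum_congr rfl this, Finset.sum_boole]
  have main := fun t => (hL t).symm.trans ((hsum t).trans (hR t))
  have h2 : ∀ u : ℕ, ((((Finset.Ico p.1 p.2).filter fun k => T.τ k = u).card : ℕ) : ℂ)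
      = if r.1 ≤ u ∧ u < r.2 then 1 else 0 := by
    intro u
    have := main (u + 1)
    have hf : ((Finset.Ico p.1 p.2).filter fun k => T.τ k + 1 = u + 1)
        = ((Finset.Ico p.1 p.2).filter fun k => T.τ k = u) := by
      apply Finset.filter_congr; intro k _; simp
    rw [hf] at this
    rw [← this]
    by_cases hc : r.1 ≤ u ∧ u < r.2
    · have e1 : r.1 < u + 1 := by omega
      have e2 : ¬ (r.2 < u + 1) := by omega
      simp [e1, e2, hc]
    · by_cases e1 : r.1 < u + 1
      · have e2 : r.2 < u + 1 := by omega
        simp [e1, e2, hc]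
      · have e2 : ¬ (r.2 < u + 1) := by omega
        simp [e1, e2, hc]
  have h3 := h2 u
  rw [show ((if r.1 ≤ u ∧ u < r.2 then 1 else 0 : ℂ))
      = (((if r.1 ≤ u ∧ u < r.2 then 1 else 0 : ℕ)) : ℂ) by split <;> norm_num] at h3
  exact_mod_cast h3

lemma mem_image_iff {p r : ℕ × ℕ} (h : tauStep T p r) (u : ℕ) :
    (∃ k, k ∈ Finset.Ico p.1 p.2 ∧ T.τ k = u) ↔ (r.1 ≤ u ∧ u < r.2) := by
  have hc := card_eq T h u
  constructor
  · rintro ⟨k, hk, hτ⟩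
    by_contra hcon
    rw [if_neg hcon] at hc
    have : k ∈ (Finset.Ico p.1 p.2).filter fun k => T.τ k = u := by
      simp [Finset.mem_filter, hk, hτ]
    rw [Finset.card_eq_zero] at hc
    simp [hc] at this
  · intro hcon
    rw [if_pos hcon] at hc
    have : ((Finset.Ico p.1 p.2).filter fun k => T.τ k = u).Nonempty := by
      rw [← Finset.card_pos, hc]; norm_num
    obtain ⟨k, hk⟩ := this
    rw [Finset.mem_filter] at hk
    exact ⟨k, hk.1, hk.2⟩

lemma interval_sub_G2 {p r : ℕ × ℕ} (h : tauStep T p r) :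
    ∀ u, r.1 ≤ u → u < r.2 → u ∈ T.Γ2 := by
  intro u h1 h2
  obtain ⟨k, hk, hτ⟩ := (mem_image_iff T h u).2 ⟨h1, h2⟩
  rw [Finset.mem_Ico] at hk
  exact hτ ▸ tau_mem2 T (h.1.2 k hk.1 hk.2)

lemma tauStep_bounds {p r : ℕ × ℕ} (h : tauStep T p r) :
    p.1 < p.2 ∧ p.2 < n ∧ r.1 < r.2 ∧ r.2 < n := by
  have h1 : p.1 < p.2 := h.1.1
  have h2 : r.1 < r.2 := h.2.1
  have h3 : p.2 - 1 ∈ T.Γ1 := h.1.2 (p.2 - 1) (by omega) (by omega)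
  have h4 := T.mem1 _ h3
  have h5 : r.2 - 1 ∈ T.Γ2 := interval_sub_G2 T h (r.2 - 1) (by omega) (by omega)
  have h6 := T.mem2 _ h5
  exact ⟨h1, by omega, h2, by omega⟩

variable (hd : T.Γ1 ∩ T.Γ2 = ∅)
include hd

lemma not_mem_both {t : ℕ} (h1 : t ∈ T.Γ1) (h2 : t ∈ T.Γ2) : False := by
  have : t ∈ T.Γ1 ∩ T.Γ2 := Finset.mem_inter.2 ⟨h1, h2⟩
  rw [hd] at this; exact absurd this (Finset.notMem_empty t)

lemma dichotomy {p r : ℕ × ℕ} (h : tauStep T p r) : p.2 ≤ r.1 ∨ r.2 ≤ p.1 := by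
  by_contra hcon
  push_neg at hcon
  obtain ⟨hc1, hc2⟩ := hcon
  have hb := tauStep_bounds T h
  set t := max p.1 r.1 with ht
  have h1 : t ∈ T.Γ1 := h.1.2 t (by omega) (by omega)
  have h2 : t ∈ T.Γ2 := interval_sub_G2 T h t (by omega) (by omega)
  exact not_mem_both T hd h1 h2

lemma no_chain {p s s' : ℕ × ℕ} (h1 : tauStep T p s) (h2 : tauStep T s s') : False := by
  have hb := tauStep_bounds T h1
  have g1 : s.1 ∈ T.Γ1 := h2.1.2 s.1 le_rfl h2.1.1
  have g2 : s.1 ∈ T.Γ2 := interval_sub_G2 T h1 s.1 le_rfl hb.2.2.1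
  exact not_mem_both T hd g1 g2

lemma no_mixed {v2 b a v1 c d : ℕ} (h1 : tauStep T (v2, b) (a, v1))
    (h2 : tauStep T (c, v1) (v2, d)) : False := by
  have hb1 := tauStep_bounds T h1
  simp only at hb1
  have g1 : v1 - 1 ∈ T.Γ1 := h2.1.2 (v1 - 1) (by
      have := h2.1.1; simp only at this ⊢; omega) (by
      have := h2.1.1; simp only at this ⊢; omega)
  have g2 : v1 - 1 ∈ T.Γ2 := interval_sub_G2 T h1 (v1 - 1) (by simp only; omega)
      (by simp only; omega)
  exact not_mem_both T hd g1 g2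

omit hd

lemma tauStep_comp {x y z u v w : ℕ} (h1 : tauStep T (x, y) (v, w))
    (h2 : tauStep T (y, z) (u, v)) : tauStep T (x, z) (u, w) := by
  have hb1 := tauStep_bounds T h1
  have hb2 := tauStep_bounds T h2
  simp only at hb1 hb2
  obtain ⟨hsp1, hlt1, heq1⟩ := h1
  obtain ⟨hsp2, hlt2, heq2⟩ := h2
  simp only at hsp1 hlt1 heq1 hsp2 hlt2 heq2 ⊢
  refine ⟨⟨by omega, ?_⟩, by omega, ?_⟩
  · intro k hk1 hk2
    by_cases hky : k < y
    · exact hsp1.2 k hk1 hky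
    · exact hsp2.2 k (by omega) hk2
  · rw [← Finset.sum_Ico_consecutive _ (le_of_lt hsp1.1) (le_of_lt hsp2.1),
      ← heq1, ← heq2]
    funext s
    simp [rvec]

lemma tauStep_unique {p r r' : ℕ × ℕ} (h : tauStep T p r) (h' : tauStep T p r') :
    r = r' := by
  have hb := tauStep_bounds T h
  have hb' := tauStep_bounds T h'
  have key : ∀ u, (r.1 ≤ u ∧ u < r.2) ↔ (r'.1 ≤ u ∧ u < r'.2) := by
    intro u
    rw [← mem_image_iff T h u, ← mem_image_iff T h' u]
  have k1 := key r.1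
  have k2 := key r'.1
  have k3 := key (r.2 - 1)
  have k4 := key (r'.2 - 1)
  have : r.1 = r'.1 ∧ r.2 = r'.2 := by omega
  exact Prod.ext this.1 this.2

lemma ite_matT_apply (C : Prop) [Decidable C] (M : MatT n) (x y : Fin n × Fin n) :
    (if C then M else (0 : MatT n)) x y = if C then M x y else 0 := by
  split <;> rfl

lemma sumRoots_ite_apply (C : ℕ × ℕ → ℕ × ℕ → Prop) [∀ p r, Decidable (C p r)]
    (s : ℕ × ℕ → ℕ × ℕ → ℂ) (a b c d : Fin n) :
    (sumRoots n fun p r =>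
        if C p r then s p r • tens (E n r.1 r.2) (E n p.2 p.1) else 0) (a, b) (c, d)
      = if C ((d : ℕ), (b : ℕ)) ((a : ℕ), (c : ℕ))
          then s ((d : ℕ), (b : ℕ)) ((a : ℕ), (c : ℕ)) else 0 := by
  have hrw : ∀ (p r : ℕ × ℕ),
      (if C p r then s p r • tens (E n r.1 r.2) (E n p.2 p.1) else 0)
        = (if C p r then s p r else 0) • tens (E n r.1 r.2) (E n p.2 p.1) := by
    intro p r; split <;> simp
  unfold sumRoots
  simp only [hrw, Matrix.sum_apply, Matrix.smul_apply, tens, E, smul_eq_mul,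
    mul_ite, ite_mul, mul_one, mul_zero, zero_mul, one_mul, ite_and,
    Finset.sum_ite_irrel, Finset.sum_const_zero, Finset.sum_ite_eq, Finset.mem_range,
    Fin.is_lt, if_true]

lemma sumRoots_ite_apply' (C : ℕ × ℕ → ℕ × ℕ → Prop) [∀ p r, Decidable (C p r)]
    (s : ℕ × ℕ → ℕ × ℕ → ℂ) (a b c d : Fin n) :
    (sumRoots n fun p r =>
        if C p r then s p r • tens (E n p.2 p.1) (E n r.1 r.2) else 0) (a, b) (c, d)
      = if C ((c : ℕ), (a : ℕ)) ((b : ℕ), (d : ℕ))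
          then s ((c : ℕ), (a : ℕ)) ((b : ℕ), (d : ℕ)) else 0 := by
  have hrw : ∀ (p r : ℕ × ℕ),
      (if C p r then s p r • tens (E n p.2 p.1) (E n r.1 r.2) else 0)
        = (if C p r then s p r else 0) • tens (E n p.2 p.1) (E n r.1 r.2) := by
    intro p r; split <;> simp
  unfold sumRoots
  simp only [hrw, Matrix.sum_apply, Matrix.smul_apply, tens, E, smul_eq_mul,
    mul_ite, ite_mul, mul_one, mul_zero, zero_mul, one_mul, ite_and,
    Finset.sum_ite_irrel, Finset.sum_const_zero, Finset.sum_ite_eq, Finset.mem_range,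
    Fin.is_lt, if_true]

lemma sum_collapse {m : ℕ} (f : ℕ → ℂ) (t : ℕ) (ht : t < m) :
    ∑ i ∈ range m, (if t = i then f i else 0) = f t := by
  rw [Finset.sum_ite_eq]; simp [Finset.mem_range, ht]

lemma P0_apply (a b c d : Fin n) :
    P0 n (a, b) (c, d)
      = if (a : ℕ) = c ∧ (b : ℕ) = d ∧ (a : ℕ) = b then 1 else 0 := by
  unfold P0
  rw [Matrix.sum_apply]
  have h : ∀ i ∈ range n, (tens (E n i i) (E n i i)) (a, b) (c, d)
      = if (a : ℕ) = i then
          (if (c : ℕ) = i ∧ (b : ℕ) = i ∧ (d : ℕ) = i then 1 else 0) else 0 := by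
    intro i _
    simp only [tens, E]
    by_cases h1 : (a : ℕ) = i <;> by_cases h2 : (c : ℕ) = i <;>
      by_cases h3 : (b : ℕ) = i <;> by_cases h4 : (d : ℕ) = i <;>
      simp [h1, h2, h3, h4]
  rw [Finset.sum_congr rfl h, sum_collapse _ _ a.is_lt]
  have : ((c : ℕ) = a ∧ (b : ℕ) = a ∧ (d : ℕ) = a)
      ↔ ((a : ℕ) = c ∧ (b : ℕ) = d ∧ (a : ℕ) = b) := by omega
  rw [if_congr this rfl rfl]

lemma S1_apply (a b c d : Fin n) :
    (∑ i ∈ range n, ∑ j ∈ range n,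
        if i ≠ j then tens (E n i i) (E n j j) else 0) (a, b) (c, d)
      = if (a : ℕ) = c ∧ (b : ℕ) = d ∧ (a : ℕ) ≠ b then 1 else 0 := by
  rw [Matrix.sum_apply]
  have h : ∀ i ∈ range n, (∑ j ∈ range n,
        if i ≠ j then tens (E n i i) (E n j j) else 0) (a, b) (c, d)
      = if (a : ℕ) = i then
          (if (b : ℕ) ≠ i ∧ (c : ℕ) = i ∧ (d : ℕ) = b then 1 else 0) else 0 := by
    intro i _
    rw [Matrix.sum_apply]
    have h2 : ∀ j ∈ range n, (if i ≠ j then tens (E n i i) (E n j j) else 0) (a, b) (c, d)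
        = if (b : ℕ) = j then
            (if i ≠ j ∧ (a : ℕ) = i ∧ (c : ℕ) = i ∧ (d : ℕ) = j then 1 else 0) else 0 := by
      intro j _
      rw [ite_matT_apply]
      simp only [tens, E]
      by_cases h1 : i ≠ j <;> by_cases h2 : (a : ℕ) = i <;> by_cases h3 : (c : ℕ) = i <;>
        by_cases h4 : (b : ℕ) = j <;> by_cases h5 : (d : ℕ) = j <;>
        simp [h1, h2, h3, h4, h5] <;> omega
    rw [Finset.sum_congr rfl h2, sum_collapse _ _ b.is_lt]
    by_cases h1 : (a : ℕ) = i <;>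
      [skip; simp [h1]]
    simp only [h1, if_true, true_and]
    split_ifs <;> first | rfl | (exfalso; omega)
  rw [Finset.sum_congr rfl h, sum_collapse _ _ a.is_lt]
  have : ((b : ℕ) ≠ (a:ℕ) ∧ (c : ℕ) = (a:ℕ) ∧ (d : ℕ) = b)
      ↔ ((a : ℕ) = c ∧ (b : ℕ) = d ∧ (a : ℕ) ≠ b) := by omega
  rw [if_congr this rfl rfl]

lemma S2_apply (a b c d : Fin n) :
    (∑ i ∈ range n, ∑ j ∈ range n,
        if j < i then tens (E n i j) (E n j i) else 0) (a, b) (c, d)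
      = if (b : ℕ) < a ∧ (c : ℕ) = b ∧ (d : ℕ) = a then 1 else 0 := by
  rw [Matrix.sum_apply]
  have h : ∀ i ∈ range n, (∑ j ∈ range n,
        if j < i then tens (E n i j) (E n j i) else 0) (a, b) (c, d)
      = if (a : ℕ) = i then
          (if (b : ℕ) < i ∧ (c : ℕ) = b ∧ (d : ℕ) = i then 1 else 0) else 0 := by
    intro i _
    rw [Matrix.sum_apply]
    have h2 : ∀ j ∈ range n, (if j < i then tens (E n i j) (E n j i) else 0) (a, b) (c, d)
        = if (b : ℕ) = j then
            (if j < i ∧ (a : ℕ) = i ∧ (c : ℕ) = j ∧ (d : ℕ) = i then 1 else 0) else 0 := by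
      intro j _
      rw [ite_matT_apply]
      simp only [tens, E]
      by_cases h1 : j < i <;> by_cases h2 : (a : ℕ) = i <;> by_cases h3 : (c : ℕ) = j <;>
        by_cases h4 : (b : ℕ) = j <;> by_cases h5 : (d : ℕ) = i <;>
        simp [h1, h2, h3, h4, h5] <;> omega
    rw [Finset.sum_congr rfl h2, sum_collapse _ _ b.is_lt]
    by_cases h1 : (a : ℕ) = i <;>
      [skip; simp [h1]]
    all_goals simp only [h1, if_true, true_and]
    all_goals split_ifs <;> first | rfl | (exfalso; omega)
  rw [Finset.sum_congr rfl h, sum_collapse _ _ a.is_lt]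

lemma RsQ_apply (q : ℝ) (a b c d : Fin n) :
    RsQ n q (a, b) (c, d)
      = (if (a : ℕ) = c ∧ (b : ℕ) = d then (if (a : ℕ) = b then (q : ℂ) else 1) else 0)
        + (if (a : ℕ) = d ∧ (b : ℕ) = c ∧ (b : ℕ) < (a : ℕ)
            then (q : ℂ) - (q : ℂ)⁻¹ else 0) := by
  unfold RsQ
  simp only [Matrix.add_apply, Matrix.smul_apply, smul_eq_mul]
  rw [P0_apply, S1_apply, S2_apply]
  split_ifs <;> first | (exfalso; omega) | ring1

/-- The level-1 twist summand `A = J − 1`. -/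
def SAm (q : ℝ) (T : BDTriple n) : MatT n :=
  sumRoots n fun p r =>
    if tauStep T p r then
      (((q : ℂ) - (q : ℂ)⁻¹) * sgn T p r * qpow q (Kc T p r)) •
        tens (E n r.1 r.2) (E n p.2 p.1)
    else 0

lemma precK_one {p r : ℕ × ℕ} : precK T 1 p r ↔ tauStep T p r := by
  constructor
  · rintro ⟨s, h1, h2⟩
    have : s = r := h2
    exact this ▸ h1
  · intro h
    exact ⟨r, h, rfl⟩

include hd in
lemma precK_two_false (m : ℕ) (p r : ℕ × ℕ) : ¬ precK T (m + 2) p r := by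
  rintro ⟨s, h1, s', h2, -⟩
  exact no_chain T hd h1 h2

include hd in
lemma Jlevel_ge2 (q : ℝ) (m : ℕ) : Jlevel q T (m + 2) = 1 := by
  unfold Jlevel
  have h : (sumRoots n fun p r =>
      if precK T (m + 2) p r then
        (((q : ℂ) - (q : ℂ)⁻¹) * sgn T p r * qpow q (Kc T p r)) •
          tens (E n r.1 r.2) (E n p.2 p.1)
      else 0) = 0 := by
    unfold sumRoots
    have : ∀ (p r : ℕ × ℕ), (if precK T (m + 2) p r then
        (((q : ℂ) - (q : ℂ)⁻¹) * sgn T p r * qpow q (Kc T p r)) •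
          tens (E n r.1 r.2) (E n p.2 p.1)
      else 0) = 0 := by
      intro p r; rw [if_neg (precK_two_false T hd m p r)]
    simp only [this, Finset.sum_const_zero]
  rw [h, add_zero]

lemma Jlevel_one (q : ℝ) : Jlevel q T 1 = 1 + SAm q T := by
  unfold Jlevel SAm
  congr 1
  apply congrArg (sumRoots n)
  funext p r
  rw [if_congr (precK_one T) rfl rfl]

include hd in
lemma Jmat_eq (q : ℝ) (hn : 1 ≤ n) : Jmat q T = 1 + SAm q T := by
  unfold Jmat
  have key : ∀ m : ℕ, 1 ≤ m →
      ((List.range m).map fun i => Jlevel q T (i + 1)).prod = Jlevel q T 1 := by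
    intro m hm
    induction m with
    | zero => omega
    | succ k ih =>
      rw [List.range_succ, List.map_append, List.prod_append]
      rcases Nat.eq_or_lt_of_le hm with h | h
      · have : k = 0 := by omega
        subst this
        simp
      · have hk : 1 ≤ k := by omega
        rw [ih hk]
        have hlev : Jlevel q T (k + 1) = 1 := by
          have e : k + 1 = (k - 1) + 2 := by omega
          rw [e]; exact Jlevel_ge2 T hd q (k - 1)
        simp [hlev]
  rw [key n hn, Jlevel_one]

lemma SA_apply (q : ℝ) (a b c d : Fin n) :
    SAm q T (a, b) (c, d)
      = if tauStep T ((d : ℕ), (b : ℕ)) ((a : ℕ), (c : ℕ)) then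
          ((q : ℂ) - (q : ℂ)⁻¹) * sgn T ((d : ℕ), (b : ℕ)) ((a : ℕ), (c : ℕ))
            * qpow q (Kc T ((d : ℕ), (b : ℕ)) ((a : ℕ), (c : ℕ)))
        else 0 := by
  unfold SAm
  exact sumRoots_ite_apply (tauStep T) _ a b c d

/-- Support predicate: `M` lives on the elementary tensors `e_{τα} ⊗ e_{−α}`. -/
def SuppT (T : BDTriple n) (M : MatT n) : Prop :=
  ∀ a b c d : Fin n,
    ¬ tauStep T ((d : ℕ), (b : ℕ)) ((a : ℕ), (c : ℕ)) → M (a, b) (c, d) = 0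

lemma suppT_SA (q : ℝ) : SuppT T (SAm q T) := by
  intro a b c d h
  rw [SA_apply, if_neg h]

lemma suppT_mul {M N : MatT n} (hM : SuppT T M) (hN : SuppT T N) : SuppT T (M * N) := by
  intro a b c d h
  rw [Matrix.mul_apply]
  apply Finset.sum_eq_zero
  rintro ⟨v1, v2⟩ -
  by_cases h1 : tauStep T ((v2 : ℕ), (b : ℕ)) ((a : ℕ), (v1 : ℕ))
  · by_cases h2 : tauStep T ((d : ℕ), (v2 : ℕ)) ((v1 : ℕ), (c : ℕ))
    · exact absurd (tauStep_comp T h2 h1) h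
    · rw [hN v1 v2 c d h2, mul_zero]
  · rw [hM a b v1 v2 h1, zero_mul]

lemma suppT_neg {M : MatT n} (hM : SuppT T M) : SuppT T (-M) := by
  intro a b c d h
  have := hM a b c d h
  simp [Matrix.neg_apply, this]

/-- Length lower bound predicate. -/
def LenT (m : ℕ) (M : MatT n) : Prop :=
  ∀ a b c d : Fin n, M (a, b) (c, d) ≠ 0 → m + (d : ℕ) ≤ (b : ℕ)

lemma lenT_SA (q : ℝ) : LenT 1 (SAm q T) := by
  intro a b c d h
  rw [SA_apply] at h
  by_cases ht : tauStep T ((d : ℕ), (b : ℕ)) ((a : ℕ), (c : ℕ))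
  · have := (tauStep_bounds T ht).1
    simp only at this
    omega
  · rw [if_neg ht] at h; exact absurd rfl h

lemma lenT_mul {m m' : ℕ} {M N : MatT n} (hM : LenT m M) (hN : LenT m' N) :
    LenT (m + m') (M * N) := by
  intro a b c d h
  rw [Matrix.mul_apply] at h
  obtain ⟨⟨v1, v2⟩, -, hv⟩ := Finset.exists_ne_zero_of_sum_ne_zero h
  have h1 := hM a b v1 v2 (left_ne_zero_of_mul hv)
  have h2 := hN v1 v2 c d (right_ne_zero_of_mul hv)
  omega

lemma lenT_neg {m : ℕ} {M : MatT n} (hM : LenT m M) : LenT m (-M) := by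
  intro a b c d h
  refine hM a b c d ?_
  simpa [Matrix.neg_apply, neg_eq_zero] using h

lemma lenT_pow (q : ℝ) : ∀ k : ℕ, LenT (k + 1) ((-(SAm q T)) ^ (k + 1)) := by
  intro k
  induction k with
  | zero => rw [pow_one]; exact lenT_neg (lenT_SA T q)
  | succ k ih =>
    rw [pow_succ]
    have := lenT_mul ih (lenT_neg (lenT_SA T q))
    exact this

lemma SA_pow_n (q : ℝ) (hn : 1 ≤ n) : (-(SAm q T)) ^ n = 0 := by
  have hnn : n - 1 + 1 = n := by omega
  have h := lenT_pow T q (n - 1)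
  rw [hnn] at h
  ext x y
  obtain ⟨a, b⟩ := x
  obtain ⟨c, d⟩ := y
  by_contra hne
  have := h a b c d hne
  have := b.is_lt
  omega

lemma suppT_pow (q : ℝ) : ∀ k : ℕ, SuppT T ((-(SAm q T)) ^ (k + 1)) := by
  intro k
  induction k with
  | zero => rw [pow_one]; exact suppT_neg T (suppT_SA T q)
  | succ k ih =>
    rw [pow_succ]
    exact suppT_mul T ih (suppT_neg T (suppT_SA T q))

include hd in
lemma left_inv_J (q : ℝ) (hn : 1 ≤ n) :
    (∑ i ∈ range n, (-(SAm q T)) ^ i) * Jmat q T = 1 := by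
  have hgeom := geom_sum_mul (-(SAm q T)) n
  rw [SA_pow_n T q hn] at hgeom
  rw [Jmat_eq T hd q hn]
  have h2 : (1 : MatT n) + SAm q T = -(-(SAm q T) - 1) := by abel
  rw [h2, mul_neg, hgeom]
  simp

include hd in
lemma Jmat_inv (q : ℝ) (hn : 1 ≤ n) :
    (Jmat q T)⁻¹ = ∑ i ∈ range n, (-(SAm q T)) ^ i :=
  Matrix.inv_eq_left_inv (left_inv_J T hd q hn)

include hd in
lemma Jinv_mul (q : ℝ) (hn : 1 ≤ n) : (Jmat q T)⁻¹ * Jmat q T = 1 := by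
  rw [Jmat_inv T hd q hn]
  exact left_inv_J T hd q hn

include hd in
lemma B_eq (q : ℝ) (hn : 1 ≤ n) :
    (Jmat q T)⁻¹ - 1 = ∑ i ∈ range (n - 1), (-(SAm q T)) ^ (i + 1) := by
  rw [Jmat_inv T hd q hn]
  have key : ∀ (x : MatT n) (m : ℕ),
      (∑ i ∈ range (m + 1), x ^ i) - 1 = ∑ i ∈ range m, x ^ (i + 1) := by
    intro x m
    rw [Finset.sum_range_succ', pow_zero, add_sub_cancel_right]
  have h := key (-(SAm q T)) (n - 1)
  have hnn : n - 1 + 1 = n := by omega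
  rw [hnn] at h
  exact h

include hd in
lemma suppT_B (q : ℝ) (hn : 1 ≤ n) : SuppT T ((Jmat q T)⁻¹ - 1) := by
  rw [B_eq T hd q hn]
  intro a b c d h
  rw [Matrix.sum_apply]
  exact Finset.sum_eq_zero fun i _ => suppT_pow T q i a b c d h

include hd in
lemma relSA (q : ℝ) (hn : 1 ≤ n) :
    SAm q T + ((Jmat q T)⁻¹ - 1) + ((Jmat q T)⁻¹ - 1) * SAm q T = 0 := by
  have h1 := Jinv_mul T hd q hn
  have h2 : (1 + ((Jmat q T)⁻¹ - 1)) * (1 + SAm q T) = 1 := by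
    rw [← Jmat_eq T hd q hn]
    have h3 : (1 : MatT n) + ((Jmat q T)⁻¹ - 1) = (Jmat q T)⁻¹ := by abel
    rw [h3]; exact h1
  have h4 : ∀ X S : MatT n, (1 + (X - 1)) * (1 + S) = 1 + (S + (X - 1) + (X - 1) * S) := by
    intro X S; noncomm_ring
  rw [h4] at h2
  have h5 : (1 : MatT n) + (SAm q T + ((Jmat q T)⁻¹ - 1) + ((Jmat q T)⁻¹ - 1) * SAm q T)
      = 1 + 0 := by rw [add_zero]; exact h2
  exact add_left_cancel h5

lemma entry_coe (M : MatT n) (a b c d : Fin n) :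
    entry M (a : ℕ) (b : ℕ) (c : ℕ) (d : ℕ) = M (a, b) (c, d) := by
  unfold entry
  rw [dif_pos ⟨a.is_lt, b.is_lt, c.is_lt, d.is_lt⟩]

include hd in
lemma part_i (q : ℝ) (hn : 1 ≤ n) :
    ∃ c : ℕ × ℕ → ℂ, (Jmat q T)⁻¹ - 1 =
      sumRoots n fun p r =>
        if tauStep T p r then c p • tens (E n r.1 r.2) (E n p.2 p.1) else 0 := by
  refine ⟨fun p => if h : ∃ r, tauStep T p r then
      entry ((Jmat q T)⁻¹ - 1) h.choose.1 p.2 h.choose.2 p.1 else 0, ?_⟩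
  ext x y
  obtain ⟨a, b⟩ := x; obtain ⟨c', d⟩ := y
  rw [sumRoots_ite_apply]
  by_cases ht : tauStep T ((d : ℕ), (b : ℕ)) ((a : ℕ), (c' : ℕ))
  · rw [if_pos ht]
    have hex : ∃ r, tauStep T ((d : ℕ), (b : ℕ)) r := ⟨_, ht⟩
    beta_reduce
    rw [dif_pos hex]
    have hch : hex.choose = ((a : ℕ), (c' : ℕ)) := tauStep_unique T hex.choose_spec ht
    rw [hch]
    exact (entry_coe _ a b c' d).symm
  · rw [if_neg ht]
    exact suppT_B T hd q hn a b c' d ht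

lemma mul_RsQ_apply (q : ℝ) (M : MatT n) (a b c d : Fin n) :
    (M * RsQ n q) (a, b) (c, d)
      = (if (c : ℕ) = (d : ℕ) then (q : ℂ) else 1) * M (a, b) (c, d)
        + (if (c : ℕ) < (d : ℕ) then ((q : ℂ) - (q : ℂ)⁻¹) * M (a, b) (d, c) else 0) := by
  rw [Matrix.mul_apply]
  have h : ∀ v : Fin n × Fin n, M (a, b) v * RsQ n q v (c, d)
      = (if v = (c, d) then (if (c : ℕ) = (d : ℕ) then (q : ℂ) else 1) * M (a, b) v else 0)
        + (if v = (d, c) then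
            (if (c : ℕ) < (d : ℕ) then ((q : ℂ) - (q : ℂ)⁻¹) * M (a, b) v else 0) else 0) := by
    rintro ⟨v1, v2⟩
    rw [RsQ_apply q v1 v2 c d]
    simp only [Prod.mk.injEq, ← Fin.val_inj]
    by_cases e1 : (v1 : ℕ) = (c : ℕ) <;> by_cases e2 : (v2 : ℕ) = (d : ℕ) <;>
      by_cases e3 : (v1 : ℕ) = (d : ℕ) <;> by_cases e4 : (v2 : ℕ) = (c : ℕ) <;>
      by_cases e5 : (v2 : ℕ) < (v1 : ℕ) <;>
      simp [e1, e2, e3, e4, e5] <;>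
      first
        | ring1
        | (exfalso; omega)
        | (split_ifs <;> first | ring1 | (exfalso; omega))
  rw [Finset.sum_congr rfl fun v _ => h v, Finset.sum_add_distrib]
  rw [Finset.sum_ite_eq' Finset.univ ((c, d) : Fin n × Fin n)
      (fun v => (if (c : ℕ) = (d : ℕ) then (q : ℂ) else 1) * M (a, b) v)]
  rw [Finset.sum_ite_eq' Finset.univ ((d, c) : Fin n × Fin n)
      (fun v => if (c : ℕ) < (d : ℕ) then ((q : ℂ) - (q : ℂ)⁻¹) * M (a, b) v else 0)]
  simp

lemma RsQ_mul_apply (q : ℝ) (M : MatT n) (a b c d : Fin n) :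
    (RsQ n q * M) (a, b) (c, d)
      = (if (a : ℕ) = (b : ℕ) then (q : ℂ) else 1) * M (a, b) (c, d)
        + (if (b : ℕ) < (a : ℕ) then ((q : ℂ) - (q : ℂ)⁻¹) * M (b, a) (c, d) else 0) := by
  rw [Matrix.mul_apply]
  have h : ∀ v : Fin n × Fin n, RsQ n q (a, b) v * M v (c, d)
      = (if v = (a, b) then (if (a : ℕ) = (b : ℕ) then (q : ℂ) else 1) * M v (c, d) else 0)
        + (if v = (b, a) then
            (if (b : ℕ) < (a : ℕ) then ((q : ℂ) - (q : ℂ)⁻¹) * M v (c, d) else 0) else 0) := by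
    rintro ⟨v1, v2⟩
    rw [RsQ_apply q a b v1 v2]
    simp only [Prod.mk.injEq, ← Fin.val_inj]
    by_cases e1 : (a : ℕ) = (v1 : ℕ) <;> by_cases e2 : (b : ℕ) = (v2 : ℕ) <;>
      by_cases e3 : (a : ℕ) = (v2 : ℕ) <;> by_cases e4 : (b : ℕ) = (v1 : ℕ) <;>
      by_cases e5 : (b : ℕ) < (a : ℕ) <;>
      simp [e1, e2, e3, e4, e5, eq_comm] <;>
      first
        | ring1
        | (exfalso; omega)
        | (split_ifs <;> first | ring1 | (exfalso; omega))
  rw [Finset.sum_congr rfl fun v _ => h v, Finset.sum_add_distrib]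
  rw [Finset.sum_ite_eq' Finset.univ ((a, b) : Fin n × Fin n)
      (fun v => (if (a : ℕ) = (b : ℕ) then (q : ℂ) else 1) * M v (c, d))]
  rw [Finset.sum_ite_eq' Finset.univ ((b, a) : Fin n × Fin n)
      (fun v => if (b : ℕ) < (a : ℕ) then ((q : ℂ) - (q : ℂ)⁻¹) * M v (c, d) else 0)]
  simp

lemma partGtr_apply {M : MatT n} (hM : SuppT T M) (a b c d : Fin n) :
    partGtr T M (a, b) (c, d) = if (c : ℕ) = (d : ℕ) then M (a, b) (c, d) else 0 := by
  unfold partGtr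
  rw [sumRoots_ite_apply (fun p r => tauStep T p r ∧ r.2 = p.1)
    (fun p r => coeffBA M p r) a b c d]
  unfold coeffBA
  by_cases h1 : tauStep T ((d : ℕ), (b : ℕ)) ((a : ℕ), (c : ℕ))
  · by_cases h2 : (c : ℕ) = (d : ℕ)
    · rw [if_pos ⟨h1, h2⟩, if_pos h2]
      exact entry_coe M a b c d
    · rw [if_neg (fun hh => h2 hh.2), if_neg h2]
  · rw [if_neg (fun hh => h1 hh.1), hM a b c d h1]
    split <;> rfl

lemma partLess21_swapSA_apply (q : ℝ) (a b c d : Fin n) :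
    partLess21 T (swap21 (SAm q T)) (a, b) (c, d)
      = if (a : ℕ) = (b : ℕ) then (swap21 (SAm q T)) (a, b) (c, d) else 0 := by
  unfold partLess21
  rw [sumRoots_ite_apply' (fun p r => tauStep T p r ∧ p.2 = r.1)
    (fun p r => entry (swap21 (SAm q T)) p.2 r.1 p.1 r.2) a b c d]
  have hsw : (swap21 (SAm q T)) (a, b) (c, d) = SAm q T (b, a) (d, c) := rfl
  by_cases h1 : tauStep T ((c : ℕ), (a : ℕ)) ((b : ℕ), (d : ℕ))
  · by_cases h2 : (a : ℕ) = (b : ℕ)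
    · rw [if_pos ⟨h1, h2⟩, if_pos h2]
      exact entry_coe (swap21 (SAm q T)) a b c d
    · rw [if_neg (fun hh => h2 hh.2), if_neg h2]
  · have hz : (swap21 (SAm q T)) (a, b) (c, d) = 0 := by
      rw [hsw, SA_apply, if_neg h1]
    rw [if_neg (fun hh => h1 hh.1), hz]
    split <;> rfl

lemma swap21_one : swap21 (1 : MatT n) = 1 := by
  ext x y
  obtain ⟨a, b⟩ := x; obtain ⟨c, d⟩ := y
  show (1 : MatT n) (b, a) (d, c) = (1 : MatT n) (a, b) (c, d)
  simp only [Matrix.one_apply, Prod.mk.injEq]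
  rw [if_congr (and_comm) rfl rfl]

lemma swap21_add (M N : MatT n) : swap21 (M + N) = swap21 M + swap21 N := rfl

include hd in
lemma part_ii (q : ℝ) (hn : 2 ≤ n) :
    RbarJ q T = RsQ n q + ((Jmat q T)⁻¹ - 1) + swap21 (Jmat q T - 1)
      + ((q : ℂ) - 1) • partGtr T ((Jmat q T)⁻¹ - 1)
      + ((q : ℂ)⁻¹ - 1) • partLess21 T (swap21 (Jmat q T - 1)) := by
  have hn1 : 1 ≤ n := by omega
  have hJm : Jmat q T - 1 = SAm q T := by rw [Jmat_eq T hd q hn1]; abel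
  have hsupB := suppT_B T hd q hn1
  have hrel := relSA T hd q hn1
  rw [hJm]
  set S := SAm q T with hS
  set B := (Jmat q T)⁻¹ - 1 with hB
  have hsupS : SuppT T S := suppT_SA T q
  have hswapJ : swap21 (Jmat q T) = 1 + swap21 S := by
    have h1 : Jmat q T = 1 + S := by rw [← hJm]; abel
    rw [h1, swap21_add, swap21_one]
  have hBJ : (Jmat q T)⁻¹ = 1 + B := by rw [hB]; abel
  unfold RbarJ
  rw [hswapJ, hBJ]
  have hexp : (1 + B) * RsQ n q * (1 + swap21 S) =
      RsQ n q + B * RsQ n q + RsQ n q * swap21 S + B * RsQ n q * swap21 S := by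
    noncomm_ring
  rw [hexp]
  have hrelE : ∀ x y : Fin n × Fin n, S x y + B x y + (B * S) x y = 0 := by
    intro x y
    have h := congrFun (congrFun hrel x) y
    simpa [Matrix.add_apply] using h
  ext x y
  obtain ⟨a, b⟩ := x; obtain ⟨c, d⟩ := y
  have hA2e1 : swap21 S (a, b) (c, d) = S (b, a) (d, c) := rfl
  have hA2e2 : swap21 S (b, a) (c, d) = S (a, b) (d, c) := rfl
  have hcross : (B * RsQ n q * swap21 S) (a, b) (c, d)
      = ∑ v : Fin n × Fin n, (if (v.1 : ℕ) < (v.2 : ℕ) then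
          ((q : ℂ) - (q : ℂ)⁻¹) * (B (a, b) (v.2, v.1) * S (v.2, v.1) (d, c)) else 0) := by
    rw [Matrix.mul_apply]
    apply Finset.sum_congr rfl
    rintro ⟨v1, v2⟩ -
    rw [show (swap21 S) (v1, v2) (c, d) = S (v2, v1) (d, c) from rfl]
    rw [mul_RsQ_apply q B a b v1 v2, add_mul]
    have hz : B (a, b) (v1, v2) * S (v2, v1) (d, c) = 0 := by
      by_cases h1 : tauStep T ((v2 : ℕ), (b : ℕ)) ((a : ℕ), (v1 : ℕ))
      · by_cases h2 : tauStep T ((c : ℕ), (v1 : ℕ)) ((v2 : ℕ), (d : ℕ))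
        · exact (no_mixed T hd h1 h2).elim
        · rw [hsupS v2 v1 d c h2, mul_zero]
      · rw [hsupB a b v1 v2 h1, zero_mul]
    rw [mul_assoc, hz, mul_zero, zero_add, ite_mul, zero_mul, mul_assoc]
  simp only [Matrix.add_apply, Matrix.smul_apply, smul_eq_mul]
  rw [mul_RsQ_apply q B a b c d, RsQ_mul_apply q (swap21 S) a b c d,
    partGtr_apply T hsupB a b c d, partLess21_swapSA_apply T q a b c d, hcross,
    hA2e1, hA2e2]
  have hreE := hrelE (a, b) (d, c)
  rw [Matrix.mul_apply] at hreE
  by_cases hT : tauStep T ((c : ℕ), (b : ℕ)) ((a : ℕ), (d : ℕ))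
  · have hbounds := tauStep_bounds T hT
    simp only at hbounds
    rcases dichotomy T hd hT with hba | hdc
    · -- image lies to the right : b ≤ a
      simp only at hba
      have hcd : (c : ℕ) < (d : ℕ) := by omega
      have hcd2 : ¬ ((c : ℕ) = (d : ℕ)) := by omega
      have hsum : (∑ v : Fin n × Fin n, (if (v.1 : ℕ) < (v.2 : ℕ) then
            ((q : ℂ) - (q : ℂ)⁻¹) * (B (a, b) (v.2, v.1) * S (v.2, v.1) (d, c)) else 0))
          = ((q : ℂ) - (q : ℂ)⁻¹) * ∑ v : Fin n × Fin n, B (a, b) v * S v (d, c) := by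
        rw [Finset.mul_sum]
        have hstep : ∀ v : Fin n × Fin n, (if (v.1 : ℕ) < (v.2 : ℕ) then
              ((q : ℂ) - (q : ℂ)⁻¹) * (B (a, b) (v.2, v.1) * S (v.2, v.1) (d, c)) else 0)
            = ((q : ℂ) - (q : ℂ)⁻¹) * (B (a, b) (v.2, v.1) * S (v.2, v.1) (d, c)) := by
          rintro ⟨v1, v2⟩
          by_cases hlt : (v1 : ℕ) < (v2 : ℕ)
          · rw [if_pos hlt]
          · rw [if_neg hlt]
            have hz : B (a, b) (v2, v1) * S (v2, v1) (d, c) = 0 := by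
              by_cases h1 : tauStep T ((v1 : ℕ), (b : ℕ)) ((a : ℕ), (v2 : ℕ))
              · by_cases h2 : tauStep T ((c : ℕ), (v1 : ℕ)) ((v2 : ℕ), (d : ℕ))
                · exfalso
                  have hb1 := tauStep_bounds T h1
                  simp only at hb1
                  omega
                · rw [hsupS v2 v1 d c h2, mul_zero]
              · rw [hsupB a b v2 v1 h1, zero_mul]
            rw [hz, mul_zero]
        rw [Finset.sum_congr rfl fun v _ => hstep v]
        exact Fintype.sum_equiv (Equiv.prodComm (Fin n) (Fin n)) _ _ (fun v => rfl)
      rw [hsum]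
      by_cases hab : (a : ℕ) = (b : ℕ)
      · obtain rfl : a = b := Fin.val_inj.mp hab
        have hba2 : ¬ ((a : ℕ) < (a : ℕ)) := by omega
        rw [if_neg hcd2, if_pos hcd, if_pos hab, if_pos hab, if_neg hba2, if_neg hcd2]
        linear_combination ((q : ℂ) - (q : ℂ)⁻¹) * hreE
      · have hba2 : (b : ℕ) < (a : ℕ) := by omega
        rw [if_neg hcd2, if_pos hcd, if_neg hab, if_neg hab, if_pos hba2, if_neg hcd2]
        linear_combination ((q : ℂ) - (q : ℂ)⁻¹) * hreE
    · -- image lies to the left : d ≤ c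
      simp only at hdc
      have hab2 : ¬ ((a : ℕ) = (b : ℕ)) := by omega
      have hba2 : ¬ ((b : ℕ) < (a : ℕ)) := by omega
      have hcdlt : ¬ ((c : ℕ) < (d : ℕ)) := by omega
      have hsum : (∑ v : Fin n × Fin n, (if (v.1 : ℕ) < (v.2 : ℕ) then
            ((q : ℂ) - (q : ℂ)⁻¹) * (B (a, b) (v.2, v.1) * S (v.2, v.1) (d, c)) else 0))
          = 0 := by
        apply Finset.sum_eq_zero
        rintro ⟨v1, v2⟩ -
        by_cases hlt : (v1 : ℕ) < (v2 : ℕ)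
        · rw [if_pos hlt]
          have hz : B (a, b) (v2, v1) * S (v2, v1) (d, c) = 0 := by
            by_cases h2 : tauStep T ((c : ℕ), (v1 : ℕ)) ((v2 : ℕ), (d : ℕ))
            · exfalso
              have hb2 := tauStep_bounds T h2
              simp only at hb2
              omega
            · rw [hsupS v2 v1 d c h2, mul_zero]
          rw [hz, mul_zero]
        · rw [if_neg hlt]
      rw [hsum]
      by_cases hcd : (c : ℕ) = (d : ℕ) <;>
        [rw [if_pos hcd, if_pos hcd, if_neg hcdlt, if_neg hab2, if_neg hab2, if_neg hba2];
         rw [if_neg hcd, if_neg hcd, if_neg hcdlt, if_neg hab2, if_neg hab2, if_neg hba2]] <;>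
        ring
  · -- no combined step : everything at position (d, c) vanishes
    have hbeta : B (a, b) (d, c) = 0 := hsupB a b d c hT
    have halpha : S (a, b) (d, c) = 0 := hsupS a b d c hT
    have hsum : (∑ v : Fin n × Fin n, (if (v.1 : ℕ) < (v.2 : ℕ) then
          ((q : ℂ) - (q : ℂ)⁻¹) * (B (a, b) (v.2, v.1) * S (v.2, v.1) (d, c)) else 0))
        = 0 := by
      apply Finset.sum_eq_zero
      rintro ⟨v1, v2⟩ -
      have hz : B (a, b) (v2, v1) * S (v2, v1) (d, c) = 0 := by
        by_cases h1 : tauStep T ((v1 : ℕ), (b : ℕ)) ((a : ℕ), (v2 : ℕ))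
        · by_cases h2 : tauStep T ((c : ℕ), (v1 : ℕ)) ((v2 : ℕ), (d : ℕ))
          · exact absurd (tauStep_comp T h2 h1) hT
          · rw [hsupS v2 v1 d c h2, mul_zero]
        · rw [hsupB a b v2 v1 h1, zero_mul]
      rw [hz, mul_zero, ite_self]
    rw [hsum, hbeta, halpha]
    by_cases hab : (a : ℕ) = (b : ℕ)
    · obtain rfl : a = b := Fin.val_inj.mp hab
      have halpha2 : S (a, a) (d, c) = 0 := halpha
      rw [halpha2]
      by_cases hcd : (c : ℕ) = (d : ℕ) <;> by_cases hcdlt : (c : ℕ) < (d : ℕ) <;>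
        by_cases hba2 : (a : ℕ) < (a : ℕ) <;>
        simp [hcd, hcdlt, hba2, hab] <;> ring
    · by_cases hcd : (c : ℕ) = (d : ℕ) <;> by_cases hcdlt : (c : ℕ) < (d : ℕ) <;>
        by_cases hba2 : (b : ℕ) < (a : ℕ) <;>
        simp [hcd, hcdlt, hba2, hab, halpha] <;> ring

end Aux

/-- in the disjoint case, with `A = J − 1`, `B = J⁻¹ − 1`:
(i) `B` is supported on the elementary tensors `e_{τα} ⊗ e_{−α}`, `α ∈ Γ̃₁`;
(ii) `R̄_J = R_s + B + A₂₁ + (q−1)B^⋗ + (q⁻¹−1)A₂₁^⋖`. -/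
theorem stmt_10 {n : ℕ} (hn : 2 ≤ n) (q : ℝ) (hq : 0 < q) (hq1 : q ≠ 1)
    (T : BDTriple n) (hdisj : T.Γ1 ∩ T.Γ2 = ∅) :
    (∃ c : ℕ × ℕ → ℂ, (Jmat q T)⁻¹ - 1 =
      sumRoots n fun p r =>
        if tauStep T p r then c p • tens (E n r.1 r.2) (E n p.2 p.1) else 0) ∧
    RbarJ q T = RsQ n q + ((Jmat q T)⁻¹ - 1) + swap21 (Jmat q T - 1)
      + ((q : ℂ) - 1) • partGtr T ((Jmat q T)⁻¹ - 1)
      + ((q : ℂ)⁻¹ - 1) • partLess21 T (swap21 (Jmat q T - 1)) := by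
  exact ⟨part_i T hdisj q (by omega), part_ii T hdisj q hn⟩

end
end GGS
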